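/- Let Δ, f, M, γ = disc_Δ(C^f) be as in the discrepancy setup, and let F_{n,m} = ∏_{i=1}^n (x_{i,1}+...+x_{i,m}) be the full set-multilinear polynomial. If g = F_{n,m} − ε·f with ε ≥ 6γ/(1−3γ), then |M(g)| ≥ ε/3. -/

import Mathlib

open Finset

/-- Combine a map on `A` and a map on `Aᶜ` into a set-multilinear monomial `[n] → [m]`. -/
def combineMono {n m : ℕ} (A : Finset (Fin n))
    (τ : {i // i ∈ A} → Fin m) (θ : {i // i ∈ Aᶜ} → Fin m) : Fin n → Fin m :=
  fun i => if h : i ∈ A then τ ⟨i, h⟩ else θ ⟨i, Finset.mem_compl.mpr h⟩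

/-- The signed measure `M` associated to a distribution `Δ` and a 0/1-coefficient
polynomial `fc`. -/
noncomputable def signedM {n m : ℕ} (Δ fc : (Fin n → Fin m) → ℝ) (κ : Fin n → Fin m) : ℝ :=
  if fc κ = 1 then Δ κ else -Δ κ

/-- **Lower bound on the measure of `g = F_{n,m} − ε·f`.** The coefficient of a monomial `κ`
in `g` is `1 − ε·fc κ`, so `M(g) = Σ_κ (1 − ε·fc κ)·M(κ)`. If `γ` bounds the discrepancy of
`C^f` under `Δ` over all nearly-balanced partitions and rectangles, and
`ε ≥ 6γ/(1−3γ)`, then `|M(g)| ≥ ε/3`. -/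
theorem measure_of_g_lower_bound (n m : ℕ) (hn : 2 ≤ n)
    (Δ : (Fin n → Fin m) → ℝ) (hΔ0 : ∀ κ, 0 ≤ Δ κ) (hΔ1 : ∑ κ, Δ κ = 1)
    (fc : (Fin n → Fin m) → ℝ) (hf : ∀ κ, fc κ = 0 ∨ fc κ = 1)
    (γ : ℝ) (hγlt : 3 * γ < 1)
    (hγ : ∀ (B : Finset (Fin n)), n ≤ 3 * B.card → 3 * B.card ≤ 2 * n →
      ∀ (R₁ : Finset ({i // i ∈ B} → Fin m)) (R₂ : Finset ({i // i ∈ Bᶜ} → Fin m)),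
        |∑ τ ∈ R₁, ∑ θ ∈ R₂, signedM Δ fc (combineMono B τ θ)| ≤ γ)
    (ε : ℝ) (hε : 6 * γ / (1 - 3 * γ) ≤ ε) :
    ε / 3 ≤ |∑ κ, (1 - ε * fc κ) * signedM Δ fc κ| := by

  classical
  obtain ⟨B, -, hBcard⟩ := Finset.exists_subset_card_eq (s := (Finset.univ : Finset (Fin n)))
    (n := (n + 2) / 3) (by simp [Finset.card_univ]; omega)
  have hB1 : n ≤ 3 * B.card := by omega
  have hB2 : 3 * B.card ≤ 2 * n := by omega
  have key : ∑ τ : {i // i ∈ B} → Fin m, ∑ θ : {i // i ∈ Bᶜ} → Fin m,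
      signedM Δ fc (combineMono B τ θ) = ∑ κ, signedM Δ fc κ := by
    have hpt := Fintype.sum_prod_type
      (f := fun (q : ({i // i ∈ B} → Fin m) × ({i // i ∈ Bᶜ} → Fin m)) =>
        signedM Δ fc (combineMono B q.1 q.2))
    rw [← hpt]
    refine Fintype.sum_bijective (fun q : ({i // i ∈ B} → Fin m) × ({i // i ∈ Bᶜ} → Fin m) =>
      combineMono B q.1 q.2) ?_ _ _ (fun x => rfl)
    refine Function.bijective_iff_has_inverse.mpr
      ⟨fun κ => (fun i => κ i, fun i => κ i), ?_, ?_⟩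
    · rintro ⟨τ, θ⟩
      refine Prod.ext ?_ ?_ <;> funext i
      · show combineMono B τ θ i = τ i
        simp only [combineMono]
        rw [dif_pos i.2]
      · show combineMono B τ θ i = θ i
        simp only [combineMono]
        rw [dif_neg (Finset.mem_compl.mp i.2)]
    · intro κ
      funext i
      simp only [combineMono]
      split <;> rfl
  have hbound : |∑ κ, signedM Δ fc κ| ≤ γ := by
    rw [← key]; exact hγ B hB1 hB2 Finset.univ Finset.univ
  have hγ0 : 0 ≤ γ := le_trans (abs_nonneg _) hbound
  set p : ℝ := ∑ κ, fc κ * Δ κ with hp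
  have hp0 : 0 ≤ p := Finset.sum_nonneg fun κ _ => by
    rcases hf κ with h | h <;> simp [h, hΔ0 κ]
  have hsum : ∑ κ, signedM Δ fc κ = 2 * p - 1 := by
    have h1 : ∀ κ, signedM Δ fc κ = 2 * (fc κ * Δ κ) - Δ κ := by
      intro κ; rcases hf κ with h | h <;> simp [signedM, h] <;> ring
    rw [Finset.sum_congr rfl fun κ _ => h1 κ, Finset.sum_sub_distrib, ← Finset.mul_sum,
      hΔ1, hp]
  have htgt : ∑ κ, (1 - ε * fc κ) * signedM Δ fc κ = (2 * p - 1) - ε * p := by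
    have h1 : ∀ κ, (1 - ε * fc κ) * signedM Δ fc κ
        = signedM Δ fc κ - ε * (fc κ * Δ κ) := by
      intro κ; rcases hf κ with h | h <;> simp [signedM, h] <;> ring
    rw [Finset.sum_congr rfl fun κ _ => h1 κ, Finset.sum_sub_distrib, ← Finset.mul_sum,
      hsum, hp]
  rw [htgt]
  have habs : |2 * p - 1| ≤ γ := by rw [← hsum]; exact hbound
  obtain ⟨hlo, hhi⟩ := abs_le.mp habs
  have hε0 : 0 ≤ ε := le_trans (div_nonneg (by linarith) (by linarith)) hε
  have hmul : 6 * γ ≤ ε * (1 - 3 * γ) :=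
    (div_le_iff₀ (by linarith : (0:ℝ) < 1 - 3 * γ)).mp hε
  have hplb : (1 - γ) / 2 ≤ p := by linarith
  have hεp : ε * ((1 - γ) / 2) ≤ ε * p := mul_le_mul_of_nonneg_left hplb hε0
  have hneg : ε / 3 ≤ -((2 * p - 1) - ε * p) := by nlinarith
  exact le_trans hneg (neg_le_abs _)
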